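/- Let R be a left Artinian ring that is left pseudo-injective. Let M be a left R-module and g, h : M → R module homomorphisms with ker g = ker h. Then there exists a unit u ∈ R such that h(x) = g(x)·u for all x ∈ M. -/

import Mathlib

open Function Submodule LinearMap

section Aux

variable {R : Type*} [Ring R]

/-- Zorn: a maximal submodule of `W` meeting `S` trivially exists. -/
private lemma exists_max_disjoint (W S : Submodule R R) :
    ∃ C : Submodule R R, C ≤ W ∧ C ⊓ S = ⊥ ∧
      ∀ D : Submodule R R, D ≤ W → D ⊓ S = ⊥ → C ≤ D → D = C := by
  obtain ⟨C, hmax⟩ := zorn_le₀ {T : Submodule R R | T ≤ W ∧ T ⊓ S = ⊥} (by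
    intro c hcs hchain
    rcases c.eq_empty_or_nonempty with rfl | hne
    · exact ⟨⊥, ⟨bot_le, bot_inf_eq S⟩, by simp⟩
    · refine ⟨sSup c, ⟨sSup_le fun T hT => (hcs hT).1, ?_⟩, fun z hz => le_sSup hz⟩
      rw [eq_bot_iff]
      rintro x hx
      obtain ⟨T, hTc, hxT⟩ := (Submodule.mem_sSup_of_directed hne hchain.directedOn).1
        (mem_inf.1 hx).1
      have : x ∈ T ⊓ S := mem_inf.2 ⟨hxT, (mem_inf.1 hx).2⟩
      rw [(hcs hTc).2] at this
      exact this)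
  exact ⟨C, hmax.prop.1, hmax.prop.2,
    fun D h1 h2 h3 => le_antisymm (hmax.le_of_ge ⟨h1, h2⟩ h3) h3⟩

/-- A maximal trivially-meeting complement makes the sup essential (inside `W`). -/
private lemma essential_of_max_disjoint {W S C : Submodule R R} (hCW : C ≤ W)
    (hdisj : C ⊓ S = ⊥)
    (hmax : ∀ D : Submodule R R, D ≤ W → D ⊓ S = ⊥ → C ≤ D → D = C) :
    ∀ T ≤ W, T ⊓ (S ⊔ C) = ⊥ → T = ⊥ := by
  intro T hTW hT
  have h1 : (C ⊔ T) ⊓ S = ⊥ := by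
    rw [eq_bot_iff]
    rintro x hx
    obtain ⟨hx1, hx2⟩ := mem_inf.1 hx
    obtain ⟨c, hc, t, ht, rfl⟩ := mem_sup.1 hx1
    have htm : t ∈ T ⊓ (S ⊔ C) := mem_inf.2 ⟨ht, by
      have : t = (c + t) - c := (add_sub_cancel_left c t).symm
      rw [this]
      exact sub_mem (mem_sup_left hx2) (mem_sup_right hc)⟩
    rw [hT] at htm
    have ht0 : t = 0 := htm
    subst ht0
    rw [add_zero] at hx2 ⊢
    have : c ∈ C ⊓ S := mem_inf.2 ⟨hc, hx2⟩
    rw [hdisj] at this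
    exact this
  have h2 : C ⊔ T = C := hmax _ (sup_le hCW hTW) h1 le_sup_left
  have hTC : T ≤ C := le_sup_right.trans h2.le
  rw [eq_bot_iff]
  intro t ht
  have : t ∈ T ⊓ (S ⊔ C) := mem_inf.2 ⟨ht, mem_sup_right (hTC ht)⟩
  rw [hT] at this
  exact this

/-- If `X` is essential in `Y` and `I ⊓ Y = ⊥`, then `I ⊔ X` is essential in `I ⊔ Y`. -/
private lemma essential_sup {I X Y : Submodule R R} (hXY : X ≤ Y) (hIY : I ⊓ Y = ⊥)
    (hess : ∀ T ≤ Y, T ⊓ X = ⊥ → T = ⊥) :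
    ∀ T ≤ I ⊔ Y, T ⊓ (I ⊔ X) = ⊥ → T = ⊥ := by
  intro T hT hTIX
  have hZ : Y ⊓ (I ⊔ T) = ⊥ := by
    apply hess _ inf_le_left
    rw [eq_bot_iff]
    rintro x hx
    have hxX : x ∈ X := (mem_inf.1 hx).2
    have hxY : x ∈ Y := (mem_inf.1 (mem_inf.1 hx).1).1
    have hxIT : x ∈ I ⊔ T := (mem_inf.1 (mem_inf.1 hx).1).2
    obtain ⟨i, hi, t, ht, hx_eq⟩ := mem_sup.1 hxIT
    have htm : t ∈ T ⊓ (I ⊔ X) := mem_inf.2 ⟨ht, by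
      have : t = x - i := by rw [← hx_eq, add_sub_cancel_left]
      rw [this]
      exact sub_mem (mem_sup_right hxX) (mem_sup_left hi)⟩
    rw [hTIX] at htm
    have ht0 : t = 0 := htm
    have hxI : x ∈ I := by rw [← hx_eq, ht0, add_zero]; exact hi
    have : x ∈ I ⊓ Y := mem_inf.2 ⟨hxI, hxY⟩
    rw [hIY] at this
    exact this
  rw [eq_bot_iff]
  intro t htT
  obtain ⟨i, hi, y, hy, ht_eq⟩ := mem_sup.1 (hT htT)
  have hym : y ∈ Y ⊓ (I ⊔ T) := mem_inf.2 ⟨hy, by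
    have : y = (i + y) - i := (add_sub_cancel_left i y).symm
    rw [this, ht_eq]
    exact sub_mem (mem_sup_right htT) (mem_sup_left hi)⟩
  rw [hZ] at hym
  have hy0 : y = 0 := hym
  have htI : t ∈ I := by rw [← ht_eq, hy0, add_zero]; exact hi
  have : t ∈ T ⊓ (I ⊔ X) := mem_inf.2 ⟨htT, mem_sup_left htI⟩
  rw [hTIX] at this
  exact this

end Aux

section Key

variable {R : Type*} [Ring R] [IsArtinianRing R]

/-- right multiplication by `a`, as a left-linear endomorphism of `R`. -/
private noncomputable def rmul (a : R) : R →ₗ[R] R := LinearMap.toSpanSingleton R R a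

private lemma rmul_apply (a x : R) : rmul a x = x * a := by
  simp [rmul, LinearMap.toSpanSingleton_apply, smul_eq_mul]

/-- Key lemma, proved by Artinian induction on a complement `C` of `I`. -/
private lemma key (hpi : ∀ I : Ideal R, ∀ f : I →ₗ[R] R, Function.Injective f →
      ∃ a : R, ∀ x : I, f x = (x : R) * a) :
    ∀ C I : Submodule R R, ∀ a b : R,
      (∀ y ∈ I, y * (a * b) = y) → I ⊓ C = ⊥ →
      (∀ T : Submodule R R, T ⊓ (I ⊔ C) = ⊥ → T = ⊥) →
      ∃ u : Rˣ, ∀ y ∈ I, y * u = y * a := by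
  have wf : WellFounded ((· < ·) : Submodule R R → Submodule R R → Prop) :=
    (inferInstance : WellFoundedLT (Submodule R R)).wf
  intro C
  induction C using wf.induction with
  | _ C ih =>
  intro I a b h1 h2 h3
  by_cases hC : C = ⊥
  · -- Base case : I is essential
    subst hC
    rw [sup_bot_eq] at h3
    set f : I →ₗ[R] R := (rmul a).comp I.subtype with hf
    have hfa : ∀ x : I, f x = (x : R) * a := fun x => rmul_apply a x
    have hfinj : Function.Injective f := by
      rw [← LinearMap.ker_eq_bot, eq_bot_iff]
      rintro ⟨y, hy⟩ hmem
      have h0 : y * a = 0 := by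
        have := (LinearMap.mem_ker.1 hmem)
        rwa [hfa ⟨y, hy⟩] at this
      have : y = 0 := by
        have := h1 y hy
        rw [← mul_assoc, h0, zero_mul] at this
        exact this.symm
      simp [this]
    obtain ⟨a₁, ha₁⟩ := hpi I f hfinj
    have hker : LinearMap.ker (rmul a₁) = ⊥ := by
      apply h3
      rw [eq_bot_iff]
      rintro x hx
      obtain ⟨hx1, hx2⟩ := mem_inf.1 hx
      have hxa : x * a₁ = 0 := by
        have := LinearMap.mem_ker.1 hx1
        rwa [rmul_apply] at this
      have hxa0 : x * a = 0 := by
        have := ha₁ ⟨x, hx2⟩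
        rw [hfa ⟨x, hx2⟩] at this
        simpa [this] using hxa
      show x ∈ (⊥ : Submodule R R)
      have := h1 x hx2
      rw [← mul_assoc, hxa0, zero_mul] at this
      simp [← this]
    have hinj : Function.Injective (rmul a₁) := LinearMap.ker_eq_bot.1 hker
    have hsurj : Function.Surjective (rmul a₁) :=
      IsArtinian.surjective_of_injective_endomorphism _ hinj
    obtain ⟨v, hv⟩ := hsurj 1
    rw [rmul_apply] at hv
    have hv2 : a₁ * v = 1 := by
      apply hinj
      rw [rmul_apply, rmul_apply, mul_assoc, hv, mul_one, one_mul]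
    refine ⟨⟨a₁, v, hv2, hv⟩, fun y hy => ?_⟩
    have := ha₁ ⟨y, hy⟩
    rw [hfa ⟨y, hy⟩] at this
    exact this ▸ rfl
  · -- Step case
    obtain ⟨S, ⟨hSC, hS0⟩, hmin⟩ := IsArtinian.set_has_minimal
      {T : Submodule R R | T ≤ C ∧ T ≠ ⊥} ⟨C, le_rfl, hC⟩
    have hatom : IsAtom S := ⟨hS0, fun T hTS => by
      by_contra h0
      exact hmin T ⟨hTS.le.trans hSC, h0⟩ hTS⟩
    have hIS : I ⊓ S = ⊥ := by
      rw [eq_bot_iff, ← h2]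
      exact inf_le_inf_left I hSC
    set Ia : Submodule R R := Submodule.map (rmul a) I with hIa
    have hmemIa : ∀ z ∈ Ia, ∃ y ∈ I, y * a = z := by
      rintro z ⟨y, hy, rfl⟩
      exact ⟨y, hy, (rmul_apply a y).symm⟩
    have hbinjIa : ∀ z ∈ Ia, z * b = 0 → z = 0 := by
      intro z hz hzb
      obtain ⟨y, hy, rfl⟩ := hmemIa z hz
      rw [mul_assoc, h1 y hy] at hzb
      rw [hzb, zero_mul]
    by_cases hgood : ∃ τ : S →ₗ[R] R, Function.Injective τ ∧ LinearMap.range τ ⊓ Ia = ⊥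
    · -- Good case: extend the map to I ⊔ S, recurse with smaller complement
      obtain ⟨τ, hτinj, hτdisj⟩ := hgood
      set I' : Submodule R R := I ⊔ S with hI'
      set π : (I × S) →ₗ[R] R := (I.subtype).coprod S.subtype with hπ
      have hπinj : Function.Injective π := by
        rw [← LinearMap.ker_eq_bot, eq_bot_iff]
        rintro ⟨⟨y, hy⟩, ⟨s, hs⟩⟩ hmem
        have h0 : y + s = 0 := LinearMap.mem_ker.1 hmem
        have hys : y = -s := eq_neg_of_add_eq_zero_left h0
        have : y ∈ I ⊓ S := mem_inf.2 ⟨hy, by rw [hys]; exact neg_mem hs⟩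
        rw [hIS] at this
        have hy0 : y = 0 := this
        have hs0 : s = 0 := by rw [hy0] at h0; simpa using h0
        simp [Prod.ext_iff, hy0, hs0]
      have hrange : LinearMap.range π = I' := (sup_eq_range I S).symm
      set e : (I × S) ≃ₗ[R] I' :=
        (LinearEquiv.ofInjective π hπinj).trans (LinearEquiv.ofEq _ _ hrange) with he
      have hecoe : ∀ p : I × S, ((e p : I') : R) = (p.1 : R) + (p.2 : R) := by
        rintro ⟨⟨y, hy⟩, ⟨s, hs⟩⟩
        simp [he, hπ, LinearEquiv.ofInjective_apply]
      set φ : I' →ₗ[R] R :=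
        (((rmul a).comp I.subtype).coprod τ).comp (e.symm : I' →ₗ[R] I × S) with hφdef
      have hφ : ∀ x : I', φ x = ((e.symm x).1 : R) * a + τ (e.symm x).2 := by
        intro x
        simp [hφdef, rmul_apply]
      have hφI : ∀ (y : R) (hy : y ∈ I) (hy' : y ∈ I'), φ ⟨y, hy'⟩ = y * a := by
        intro y hy hy'
        have hsymm : e.symm ⟨y, hy'⟩ = (⟨y, hy⟩, 0) := by
          rw [LinearEquiv.symm_apply_eq]
          apply Subtype.ext
          rw [hecoe]
          simp
        rw [hφ, hsymm]
        simp
      have hφ0 : ∀ x : I', φ x = 0 → x = 0 := by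
        intro x hx0
        set p := e.symm x with hp
        have hya : (p.1 : R) * a = -(τ p.2) := by
          rw [hφ x, ← hp] at hx0
          exact eq_neg_of_add_eq_zero_left hx0
        have hmem1 : (p.1 : R) * a ∈ Ia := ⟨(p.1 : R), p.1.2, (rmul_apply a p.1).symm ▸ rfl⟩
        have hmem2 : (p.1 : R) * a ∈ LinearMap.range τ := by
          rw [hya]; exact neg_mem ⟨p.2, rfl⟩
        have h0 : (p.1 : R) * a = 0 := by
          have : (p.1 : R) * a ∈ LinearMap.range τ ⊓ Ia := mem_inf.2 ⟨hmem2, hmem1⟩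
          rw [hτdisj] at this
          exact this
        have hp1 : (p.1 : R) = 0 := by
          have := h1 (p.1 : R) p.1.2
          rw [← mul_assoc, h0, zero_mul] at this
          exact this.symm
        have hp2 : τ p.2 = 0 := by rw [h0] at hya; simpa using hya.symm
        have hp20 : p.2 = 0 := hτinj (by simpa using hp2)
        have hpz : p = 0 := Prod.ext (Subtype.ext hp1) hp20
        have hx : e.symm x = 0 := by rw [← hp]; exact hpz
        have : x = e 0 := by rw [← hx, LinearEquiv.apply_symm_apply]
        simpa using this
      have hφinj : Function.Injective φ := by
        intro x y hxy
        have : x - y = 0 := hφ0 _ (by rw [map_sub, hxy, sub_self])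
        exact sub_eq_zero.1 this
      obtain ⟨a', ha'⟩ := hpi I' φ hφinj
      -- construct b'
      set θ := (LinearEquiv.ofInjective φ hφinj).symm with hθ
      set f₂ : (LinearMap.range φ) →ₗ[R] R := I'.subtype.comp (θ : LinearMap.range φ →ₗ[R] I')
        with hf₂
      have hf₂inj : Function.Injective f₂ := by
        intro x y hxy
        have : θ x = θ y := Subtype.ext hxy
        exact θ.injective this
      obtain ⟨b', hb'⟩ := hpi (LinearMap.range φ) f₂ hf₂inj
      have h1' : ∀ v ∈ I', v * (a' * b') = v := by
        intro v hv
        set x : I' := ⟨v, hv⟩ with hx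
        have hva' : v * a' = φ x := (ha' x).symm
        have hmem : φ x ∈ LinearMap.range φ := ⟨x, rfl⟩
        have hzeq : (⟨φ x, hmem⟩ : LinearMap.range φ) = LinearEquiv.ofInjective φ hφinj x :=
          Subtype.ext (by simp [LinearEquiv.ofInjective_apply])
        have := hb' ⟨φ x, hmem⟩
        rw [hf₂] at this
        simp only [LinearMap.coe_comp, Function.comp_apply, coe_subtype] at this
        rw [hzeq, hθ] at this
        simp only [LinearEquiv.coe_coe, LinearEquiv.symm_apply_apply] at this
        calc v * (a' * b') = (v * a') * b' := by rw [mul_assoc]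
        _ = φ x * b' := by rw [hva']
        _ = v := this.symm
      obtain ⟨C', hC'C, hC'S, hC'max⟩ := exists_max_disjoint C S
      have hlt : C' < C := by
        rcases lt_or_eq_of_le hC'C with h | h
        · exact h
        · exfalso
          apply hS0
          rw [eq_bot_iff]
          intro s hs
          have : s ∈ C' ⊓ S := mem_inf.2 ⟨by rw [h]; exact hSC hs, hs⟩
          rw [hC'S] at this
          exact this
      have hI'C' : I' ⊓ C' = ⊥ := by
        rw [eq_bot_iff]
        rintro x hx
        obtain ⟨hx1, hx2⟩ := mem_inf.1 hx
        obtain ⟨y, hy, s, hs, rfl⟩ := mem_sup.1 hx1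
        have hyC : y ∈ C := by
          have : y = (y + s) - s := (add_sub_cancel_right y s).symm
          rw [this]
          exact sub_mem (hC'C hx2) (hSC hs)
        have hy0 : y = 0 := by
          have : y ∈ I ⊓ C := mem_inf.2 ⟨hy, hyC⟩
          rw [h2] at this
          exact this
        subst hy0
        rw [zero_add] at hx2 ⊢
        have : s ∈ C' ⊓ S := mem_inf.2 ⟨hx2, hs⟩
        rw [hC'S] at this
        exact this
      have hess' : ∀ T : Submodule R R, T ⊓ (I' ⊔ C') = ⊥ → T = ⊥ := by
        have essC : ∀ T ≤ C, T ⊓ (S ⊔ C') = ⊥ → T = ⊥ :=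
          essential_of_max_disjoint hC'C hC'S hC'max
        have essIC : ∀ T ≤ I ⊔ C, T ⊓ (I ⊔ (S ⊔ C')) = ⊥ → T = ⊥ :=
          essential_sup (sup_le hSC hC'C) h2 essC
        intro T hT
        have hsupeq : I ⊔ (S ⊔ C') = I' ⊔ C' := by rw [hI', sup_assoc]
        have hT1 : T ⊓ (I ⊔ C) = ⊥ := by
          apply essIC _ inf_le_right
          rw [hsupeq, eq_bot_iff]
          rintro x hx
          obtain ⟨hx1, hx2⟩ := mem_inf.1 hx
          have : x ∈ T ⊓ (I' ⊔ C') := mem_inf.2 ⟨(mem_inf.1 hx1).1, hx2⟩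
          rw [hT] at this
          exact this
        exact h3 T hT1
      obtain ⟨u, hu⟩ := ih C' hlt I' a' b' h1' hI'C' hess'
      refine ⟨u, fun y hy => ?_⟩
      have hyI' : y ∈ I' := le_sup_left (α := Submodule R R) hy
      have h4 := hu y hyI'
      have h5 : y * a' = y * a := by
        have := ha' ⟨y, hyI'⟩
        rw [hφI y hy hyI'] at this
        exact this.symm
      rw [h4, h5]
    · -- Bad case: contradiction
      exfalso
      push_neg at hgood
      have hcopy : ∀ τ : S →ₗ[R] R, Function.Injective τ → LinearMap.range τ ≤ Ia := by
        intro τ hτ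
        have hratom : IsAtom (LinearMap.range τ) := by
          have hS : IsSimpleModule R S := isSimpleModule_iff_isAtom.2 hatom
          have : IsSimpleModule R (LinearMap.range τ) :=
            IsSimpleModule.congr (LinearEquiv.ofInjective τ hτ).symm
          exact isSimpleModule_iff_isAtom.1 this
        rcases lt_or_eq_of_le (inf_le_left : LinearMap.range τ ⊓ Ia ≤ LinearMap.range τ)
          with h | h
        · exact absurd (hratom.2 _ h) (hgood τ hτ)
        · exact inf_eq_left.1 h
      set Scop : Set (Submodule R R) :=
        {T | ∃ τ : S →ₗ[R] R, Function.Injective τ ∧ LinearMap.range τ = T} with hScop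
      set Sig : Submodule R R := sSup Scop with hSig
      have hSigIa : Sig ≤ Ia := sSup_le (by rintro T ⟨τ, hτ, rfl⟩; exact hcopy τ hτ)
      have hSSig : S ≤ Sig := le_sSup ⟨S.subtype, injective_subtype S, range_subtype S⟩
      have hmapb : ∀ x ∈ Sig, x * b ∈ Sig := by
        have hle : Sig ≤ Submodule.comap (rmul b) Sig := by
          apply sSup_le
          rintro T ⟨τ, hτ, rfl⟩
          intro x hx
          obtain ⟨s, rfl⟩ := hx
          have hcompinj : Function.Injective ((rmul b).comp τ) := by
            intro s t hst
            apply hτ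
            have hsub : τ (s - t) ∈ Ia := hcopy τ hτ ⟨s - t, rfl⟩
            have h0 : τ (s - t) * b = 0 := by
              have : τ s * b = τ t * b := by
                simpa [rmul_apply] using hst
              rw [map_sub, sub_mul, this, sub_self]
            have := hbinjIa _ hsub h0
            rw [map_sub] at this
            exact sub_eq_zero.1 this
          have : (rmul b) (τ s) ∈ LinearMap.range ((rmul b).comp τ) := ⟨s, rfl⟩
          have hmemScop : LinearMap.range ((rmul b).comp τ) ∈ Scop :=
            ⟨(rmul b).comp τ, hcompinj, rfl⟩
          exact mem_comap.2 (le_sSup hmemScop this)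
        intro x hx
        have := hle hx
        rwa [mem_comap, rmul_apply] at this
      set ε : Sig →ₗ[R] Sig := (rmul b).restrict hmapb with hε
      have hεinj : Function.Injective ε := by
        rintro ⟨x, hx⟩ ⟨y, hy⟩ hxy
        apply Subtype.ext
        have hval : x * b = y * b := by
          have := congrArg (Subtype.val) hxy
          have h' : rmul b x = rmul b y := this
          simpa only [rmul_apply] using h'
        have hsub : x - y ∈ Ia := hSigIa (sub_mem hx hy)
        have h0 : (x - y) * b = 0 := by rw [sub_mul, hval, sub_self]
        have := hbinjIa _ hsub h0
        exact sub_eq_zero.1 this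
      have hεsurj : Function.Surjective ε :=
        IsArtinian.surjective_of_injective_endomorphism ε hεinj
      obtain ⟨z, hzS, hz0⟩ := (Submodule.ne_bot_iff S).1 hS0
      obtain ⟨⟨x, hxSig⟩, hx⟩ := hεsurj ⟨z, hSSig hzS⟩
      have hxb : x * b = z := by
        have := congrArg (Subtype.val) hx
        have h' : rmul b x = z := this
        simpa only [rmul_apply] using h'
      obtain ⟨y, hyI, hya⟩ := hmemIa x (hSigIa hxSig)
      have hzI : z ∈ I := by
        have : z = y := by rw [← hxb, ← hya, mul_assoc, h1 y hyI]
        rw [this]; exact hyI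
      have : z ∈ I ⊓ S := mem_inf.2 ⟨hzI, hzS⟩
      rw [hIS] at this
      exact hz0 this

end Key

/-- Bass-type lemma: if `R` is a left Artinian, left pseudo-injective ring, `M` a left
`R`-module and `g, h : M → R` are module homomorphisms with `ker g = ker h`, then there is
a unit `u ∈ R` with `h(x) = g(x)·u` for all `x ∈ M`.  Left pseudo-injectivity means every
injective homomorphism from a left ideal into `R` is given by right multiplication. -/
theorem exists_unit_of_ker_eq_ker {R : Type*} [Ring R] [IsArtinianRing R]
    (hpi : ∀ I : Ideal R, ∀ f : I →ₗ[R] R, Function.Injective f →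
      ∃ a : R, ∀ x : I, f x = (x : R) * a)
    {M : Type*} [AddCommGroup M] [Module R M]
    (g h : M →ₗ[R] R) (hker : LinearMap.ker g = LinearMap.ker h) :
    ∃ u : Rˣ, ∀ x : M, h x = g x * u := by
  -- construct `a` with `h x = g x * a`
  have mk_map : ∀ (g h : M →ₗ[R] R), LinearMap.ker g = LinearMap.ker h →
      ∃ a : R, ∀ x : M, h x = g x * a := by
    intro g h hker
    set hbar : (M ⧸ LinearMap.ker g) →ₗ[R] R :=
      (LinearMap.ker g).liftQ h (le_of_eq hker) with hhbar
    set f : (LinearMap.range g) →ₗ[R] R :=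
      hbar.comp (g.quotKerEquivRange.symm : LinearMap.range g →ₗ[R] M ⧸ LinearMap.ker g)
      with hfdef
    have hfx : ∀ x : M, f ⟨g x, LinearMap.mem_range_self g x⟩ = h x := by
      intro x
      have h1 : g.quotKerEquivRange.symm ⟨g x, LinearMap.mem_range_self g x⟩ =
          (LinearMap.ker g).mkQ x :=
        g.quotKerEquivRange_symm_apply_image x (LinearMap.mem_range_self g x)
      simp only [hfdef, LinearMap.coe_comp, Function.comp_apply, LinearEquiv.coe_coe, h1]
      simp [hhbar, Submodule.mkQ_apply, Submodule.liftQ_apply]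
    have hfinj : Function.Injective f := by
      have hbarinj : Function.Injective hbar := by
        rw [← LinearMap.ker_eq_bot]
        exact Submodule.ker_liftQ_eq_bot' _ _ hker
      exact hbarinj.comp g.quotKerEquivRange.symm.injective
    obtain ⟨a, ha⟩ := hpi (LinearMap.range g) f hfinj
    refine ⟨a, fun x => ?_⟩
    rw [← hfx x, ha ⟨g x, LinearMap.mem_range_self g x⟩]
  obtain ⟨a, ha⟩ := mk_map g h hker
  obtain ⟨b, hb⟩ := mk_map h g hker.symm
  have h1 : ∀ y ∈ LinearMap.range g, y * (a * b) = y := by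
    rintro y ⟨x, rfl⟩
    rw [← mul_assoc, ← ha x, ← hb x]
  obtain ⟨C, _, hCdisj, hCmax⟩ := exists_max_disjoint ⊤ (LinearMap.range g)
  have h2 : LinearMap.range g ⊓ C = ⊥ := by rw [inf_comm]; exact hCdisj
  have h3 : ∀ T : Submodule R R, T ⊓ (LinearMap.range g ⊔ C) = ⊥ → T = ⊥ := by
    intro T hT
    exact essential_of_max_disjoint le_top hCdisj hCmax T le_top hT
  obtain ⟨u, hu⟩ := key hpi C (LinearMap.range g) a b h1 h2 h3
  exact ⟨u, fun x => by rw [ha x, ← hu (g x) (LinearMap.mem_range_self g x)]⟩
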